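/- Let x₁ ∈ ℝ^d with 0 < ‖x₁‖ ≤ G and let (z_t)_{t≥1} be i.i.d. random vectors each equal to x₁ with probability 1/2 and -x₁ with probability 1/2. Define the SGD iterates by x_{t+1} = x_t - α_t(∇f(x_t) + z_t) with α_t = 1/(2√(t+1)) and f the Huber cost with threshold G. Then for every t ≥ 1, P(x_t = x_{t-1} = ⋯ = x₁) = 2^{-t+1}. -/

import Mathlib

open MeasureTheory

/-- Gradient of the Huber cost with threshold `G`. -/
noncomputable def huberGrad {d : ℕ} (G : ℝ) (x : EuclideanSpace ℝ (Fin d)) :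
    EuclideanSpace ℝ (Fin d) :=
  if ‖x‖ ≤ G then x else (G / ‖x‖) • x

theorem sgd_lower_bound_event_probability
    {Ω : Type*} [MeasurableSpace Ω] {μ : Measure Ω} [IsProbabilityMeasure μ]
    {d : ℕ} (G : ℝ) (hG : 0 < G)
    (x₁ : EuclideanSpace ℝ (Fin d)) (hx₁ : 0 < ‖x₁‖) (hx₁G : ‖x₁‖ ≤ G)
    (z : ℕ → Ω → EuclideanSpace ℝ (Fin d))
    (hzmeas : ∀ t, Measurable (z t))
    (hindep : ProbabilityTheory.iIndepFun z μ)
    (hdist : ∀ t, 1 ≤ t →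
      μ {ω | z t ω = x₁} = 1 / 2 ∧ μ {ω | z t ω = -x₁} = 1 / 2)
    (X : ℕ → Ω → EuclideanSpace ℝ (Fin d))
    (hX1 : ∀ ω, X 1 ω = x₁)
    (hrec : ∀ t, 1 ≤ t → ∀ ω,
      X (t + 1) ω = X t ω - (1 / (2 * Real.sqrt (t + 1))) • (huberGrad G (X t ω) + z t ω)) :
    ∀ t, 1 ≤ t →
      μ {ω | ∀ k, 1 ≤ k → k ≤ t → X k ω = x₁} = (1 / 2 : ENNReal) ^ (t - 1) := by
  intro t ht
  have hg : huberGrad G x₁ = x₁ := by simp [huberGrad, hx₁G]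
  have hset : {ω | ∀ k, 1 ≤ k → k ≤ t → X k ω = x₁}
      = ⋂ s ∈ Finset.Icc 1 (t - 1), z s ⁻¹' {-x₁} := by
    ext ω
    simp only [Set.mem_setOf_eq, Set.mem_iInter, Set.mem_preimage, Set.mem_singleton_iff,
      Finset.mem_Icc]
    constructor
    · intro h s ⟨hs1, hs2⟩
      have h1 : X s ω = x₁ := h s hs1 (by omega)
      have h2 : X (s + 1) ω = x₁ := h (s + 1) (by omega) (by omega)
      have hr := hrec s hs1 ω
      rw [h1, h2, hg] at hr
      have hc : (1 / (2 * Real.sqrt (s + 1))) ≠ 0 := by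
        have hs : (0 : ℝ) < Real.sqrt (s + 1) := Real.sqrt_pos.mpr (by positivity)
        positivity
      have hz0 : (1 / (2 * Real.sqrt (s + 1))) • (x₁ + z s ω) = 0 := by
        have h0 := hr.symm
        rwa [sub_eq_self] at h0
      rcases smul_eq_zero.mp hz0 with hcz | hsum
      · exact absurd hcz hc
      · exact eq_neg_of_add_eq_zero_right hsum
    · intro h k hk1 hkt
      induction k, hk1 using Nat.le_induction with
      | base => exact hX1 ω
      | succ n hn ih =>
        have hXn : X n ω = x₁ := ih (by omega)
        have hz := h n ⟨hn, by omega⟩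
        rw [hrec n hn ω, hXn, hz, hg]
        simp
  rw [hset]
  have hsets : ∀ i, i ∈ Finset.Icc 1 (t - 1) →
      MeasurableSet ({-x₁} : Set (EuclideanSpace ℝ (Fin d))) :=
    fun i _ => measurableSet_singleton _
  rw [hindep.measure_inter_preimage_eq_mul (Finset.Icc 1 (t - 1))
    (sets := fun _ => {-x₁}) hsets]
  have : ∀ i ∈ Finset.Icc 1 (t - 1), μ (z i ⁻¹' {-x₁}) = 1 / 2 := by
    intro i hi
    rw [Finset.mem_Icc] at hi
    have := (hdist i hi.1).2
    simpa [Set.preimage, Set.mem_singleton_iff] using this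
  rw [Finset.prod_congr rfl this, Finset.prod_const, Nat.card_Icc]
  congr 1
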